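/- For every natural number n, the n-th iterate of the quantum adjoint action of E applied to K⁻¹ satisfies (ad_E)ⁿ(K⁻¹) = (∏_{j=1}^{n} (1 − q^{−2j}))·Eⁿ·K^{−n−1} in U_q(sl_2) (with the empty product equal to 1 for n = 0). -/
import Mathlib


/-- The left quantum adjoint action of `E` on `U_q(sl_2)`:
`ad_E(X) = (EX − XE)K⁻¹`. -/
def adE {A : Type*} [Ring A] (E Ki : A) (X : A) : A := (E * X - X * E) * Ki

/-- For every natural number `n`, the `n`-th iterate of the quantum
adjoint action of `E` applied to `K⁻¹` satisfies
`(ad_E)ⁿ(K⁻¹) = (∏_{j=1}^{n} (1 − q^{−2j}))·Eⁿ·K^{−n−1}` in `U_q(sl_2)`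
(with the empty product equal to `1` for `n = 0`). -/
theorem stmt4 (q : ℂ) (hq0 : q ≠ 0) (hq1 : q ^ 2 ≠ 1)
    (A : Type*) [Ring A] [Algebra ℂ A] (K Ki E F : A)
    (hKKi : K * Ki = 1) (hKiK : Ki * K = 1)
    (hKE : K * E = (q ^ 2) • (E * K))
    (hKF : K * F = (q ^ 2)⁻¹ • (F * K))
    (hEF : E * F - F * E = (q - q⁻¹)⁻¹ • (K - Ki))
    (n : ℕ) :
    (adE E Ki)^[n] Ki
      = (∏ j ∈ Finset.range n, (1 - q ^ (-2 * ((j : ℤ) + 1)))) • (E ^ n * Ki ^ (n + 1)) := by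
  have hq2 : (q : ℂ) ^ 2 ≠ 0 := pow_ne_zero _ hq0
  -- Ki * E = (q^2)⁻¹ • (E * Ki)
  have hKiE : Ki * E = (q ^ 2)⁻¹ • (E * Ki) := by
    have h := congrArg (fun x => Ki * x * Ki) hKE
    simp only [mul_smul_comm, smul_mul_assoc] at h
    rw [← mul_assoc Ki K E, hKiK, one_mul] at h
    rw [← mul_assoc Ki E K, mul_assoc (Ki * E) K Ki, hKKi, mul_one] at h
    rw [h, smul_smul, inv_mul_cancel₀ hq2, one_smul]
  -- Ki^m * E = ((q^2)⁻¹)^m • (E * Ki^m)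
  have hKipE : ∀ m : ℕ, Ki ^ m * E = ((q ^ 2)⁻¹) ^ m • (E * Ki ^ m) := by
    intro m
    induction m with
    | zero => simp
    | succ m ih =>
      rw [pow_succ, mul_assoc, hKiE, mul_smul_comm, ← mul_assoc, ih, smul_mul_assoc,
        smul_smul, ← pow_succ', mul_assoc]
  induction n with
  | zero => simp
  | succ n ih =>
    rw [Function.iterate_succ_apply', ih]
    set c : ℂ := ∏ j ∈ Finset.range n, (1 - q ^ (-2 * ((j : ℤ) + 1))) with hc
    rw [Finset.prod_range_succ, ← hc]
    have key : adE E Ki (c • (E ^ n * Ki ^ (n + 1)))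
        = c • ((1 - ((q ^ 2)⁻¹) ^ (n + 1)) • (E ^ (n + 1) * Ki ^ (n + 2))) := by
      unfold adE
      rw [mul_smul_comm, smul_mul_assoc, ← smul_sub, smul_mul_assoc]
      congr 1
      rw [mul_assoc (E ^ n) (Ki ^ (n + 1)) E, hKipE (n + 1), mul_smul_comm,
        sub_mul, smul_mul_assoc, sub_smul, one_smul]
      congr 1
      · rw [← mul_assoc E (E ^ n) (Ki ^ (n + 1)), ← pow_succ', mul_assoc, ← pow_succ]
      · congr 1
        rw [← mul_assoc (E ^ n) E (Ki ^ (n + 1)), ← pow_succ, mul_assoc, ← pow_succ]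
    rw [key, smul_smul]
    have hz : q ^ (-2 * ((n : ℤ) + 1)) = ((q ^ 2)⁻¹) ^ (n + 1) := by
      rw [inv_pow, ← pow_mul, ← zpow_natCast q, ← zpow_neg]
      congr 1
    rw [hz]
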